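/- For the reference system ẋ_ref = A_m x_ref + b(ω u_ref + θ^⊤ x_ref + σ), with u_ref(s) = C(s)(−θ^⊤ x_ref(s) − σ(s) + k_g r(s))/ω, the state satisfies x_ref(s) = G(s)(θ^⊤ x_ref(s) + σ(s)) + H(s)C(s)k_g r(s), where H(s) = (sI − A_m)^{-1}b and G(s) = H(s)(1 − C(s)). Consequently, if ‖G(s)‖_{L1} · L < 1 where L ≥ Σᵢ|θᵢ|, and r, σ are bounded, then x_ref is bounded with ‖x_ref‖_{L∞} ≤ (‖G‖_{L1}‖σ‖_{L∞} + ‖H C k_g‖_{L1}‖r‖_{L∞})/(1 − ‖G‖_{L1} L). -/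

import Mathlib

open MeasureTheory Matrix
lemma conv_bound (h f : ℝ → ℝ) (t G C : ℝ) (ht : 0 ≤ t) (hC : 0 ≤ C)
    (hh : IntegrableOn h (Set.Ici (0:ℝ)))
    (hG : (∫ u in Set.Ici (0:ℝ), |h u|) ≤ G)
    (hf : ∀ s ∈ Set.Ioc (0:ℝ) t, |f s| ≤ C) :
    |∫ s in (0:ℝ)..t, h (t - s) * f s| ≤ G * C := by
  have habs : IntegrableOn (fun u => |h u|) (Set.Ici (0:ℝ)) := hh.abs
  have hh' : IntervalIntegrable (fun u => |h u|) volume 0 t := by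
    apply IntegrableOn.intervalIntegrable
    apply habs.mono_set
    rw [Set.uIcc_of_le ht]
    exact Set.Icc_subset_Ici_self
  have hcomp : IntervalIntegrable (fun s => |h (t - s)| * C) volume 0 t := by
    have := (hh'.comp_sub_left t).symm
    simpa using this.mul_const C
  have key : ‖∫ s in (0:ℝ)..t, h (t - s) * f s‖ ≤ |∫ s in (0:ℝ)..t, |h (t - s)| * C| := by
    apply intervalIntegral.norm_integral_le_abs_of_norm_le _ hcomp
    apply (ae_restrict_iff' measurableSet_uIoc).mpr
    apply Filter.Eventually.of_forall
    intro s hs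
    rw [Set.uIoc_of_le ht] at hs
    have := hf s hs
    rw [Real.norm_eq_abs, abs_mul]
    exact mul_le_mul_of_nonneg_left this (abs_nonneg _)
  have hInt : (∫ s in (0:ℝ)..t, |h (t - s)|) = ∫ u in (0:ℝ)..t, |h u| := by
    have := intervalIntegral.integral_comp_sub_left (f := fun u => |h u|) (a := 0) (b := t) t
    simpa using this
  have hnn : 0 ≤ ∫ u in (0:ℝ)..t, |h u| := by
    apply intervalIntegral.integral_nonneg ht
    intro u _; exact abs_nonneg _
  have hle : (∫ u in (0:ℝ)..t, |h u|) ≤ G := by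
    rw [intervalIntegral.integral_of_le ht]
    refine le_trans ?_ hG
    apply setIntegral_mono_set habs
    · exact Filter.Eventually.of_forall fun u => abs_nonneg _
    · exact HasSubset.Subset.eventuallyLE (Set.Ioc_subset_Icc_self.trans Set.Icc_subset_Ici_self)
  calc |∫ s in (0:ℝ)..t, h (t - s) * f s| ≤ |∫ s in (0:ℝ)..t, |h (t - s)| * C| := key
    _ = |(∫ s in (0:ℝ)..t, |h (t - s)|) * C| := by rw [intervalIntegral.integral_mul_const]
    _ = (∫ u in (0:ℝ)..t, |h u|) * C := by
        rw [hInt, abs_of_nonneg (mul_nonneg hnn hC)]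
    _ ≤ G * C := mul_le_mul_of_nonneg_right hle hC

theorem stmt13 (n : ℕ)
    (g w : ℝ → Fin n → ℝ)           -- impulse responses of G(s) and H(s)C(s)k_g
    (θ : Fin n → ℝ) (L : ℝ) (hθL : (∑ i : Fin n, |θ i|) ≤ L)
    (gG gW : ℝ)                      -- L1 gains of G(s) and H(s)C(s)k_g
    (hgG : ∀ i : Fin n, (∫ t in Set.Ici (0:ℝ), |g t i|) ≤ gG)
    (hgW : ∀ i : Fin n, (∫ t in Set.Ici (0:ℝ), |w t i|) ≤ gW)
    (hgint : ∀ i : Fin n, IntegrableOn (fun t => g t i) (Set.Ici (0:ℝ)))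
    (hwint : ∀ i : Fin n, IntegrableOn (fun t => w t i) (Set.Ici (0:ℝ)))
    (hsmall : gG * L < 1)            -- the L1 stability requirement ‖G‖_{L1} L < 1
    (σ r : ℝ → ℝ) (hσm : Measurable σ) (hrm : Measurable r)
    (Mσ Mr : ℝ) (hMσ : ∀ t : ℝ, 0 ≤ t → |σ t| ≤ Mσ)
    (hMr : ∀ t : ℝ, 0 ≤ t → |r t| ≤ Mr)
    (xref : ℝ → Fin n → ℝ) (hxc : Continuous xref) (hx0 : xref 0 = 0)
    (hx : ∀ t : ℝ, 0 ≤ t → ∀ i : Fin n,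
      xref t i = (∫ s in (0:ℝ)..t, g (t - s) i * (θ ⬝ᵥ xref s + σ s)) +
        ∫ s in (0:ℝ)..t, w (t - s) i * r s) :
    ∀ t : ℝ, 0 ≤ t → ∀ i : Fin n,
      |xref t i| ≤ (gG * Mσ + gW * Mr) / (1 - gG * L) := by
  intro t ht i₀
  -- basic nonnegativity facts
  have hMσ0 : 0 ≤ Mσ := le_trans (abs_nonneg _) (hMσ 0 le_rfl)
  have hMr0 : 0 ≤ Mr := le_trans (abs_nonneg _) (hMr 0 le_rfl)
  have hL0 : 0 ≤ L := le_trans (Finset.sum_nonneg fun i _ => abs_nonneg _) hθL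
  have hgG0 : 0 ≤ gG := le_trans (setIntegral_nonneg measurableSet_Ici
    (fun u _ => abs_nonneg _)) (hgG i₀)
  have hgW0 : 0 ≤ gW := le_trans (setIntegral_nonneg measurableSet_Ici
    (fun u _ => abs_nonneg _)) (hgW i₀)
  have hden : 0 < 1 - gG * L := by linarith
  -- the max of ‖xref‖ on [0, t]
  obtain ⟨t', ht', hmax⟩ := (isCompact_Icc (a := (0:ℝ)) (b := t)).exists_isMaxOn
    ⟨0, Set.left_mem_Icc.mpr ht⟩ (hxc.norm.continuousOn)
  set K := ‖xref t'‖ with hK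
  have hK0 : 0 ≤ K := norm_nonneg _
  have hmax' : ∀ s ∈ Set.Icc (0:ℝ) t, ‖xref s‖ ≤ K := fun s hs => hmax hs
  -- bound on the forcing term
  have hforce : ∀ s ∈ Set.Ioc (0:ℝ) t', |θ ⬝ᵥ xref s + σ s| ≤ L * K + Mσ := by
    intro s hs
    have hsIcc : s ∈ Set.Icc (0:ℝ) t := ⟨hs.1.le, hs.2.trans ht'.2⟩
    have h1 : |θ ⬝ᵥ xref s| ≤ L * K := by
      calc |θ ⬝ᵥ xref s| = |∑ i, θ i * xref s i| := rfl
        _ ≤ ∑ i, |θ i * xref s i| := Finset.abs_sum_le_sum_abs _ _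
        _ ≤ ∑ i, |θ i| * K := by
            apply Finset.sum_le_sum
            intro i _
            rw [abs_mul]
            exact mul_le_mul_of_nonneg_left
              (le_trans (norm_le_pi_norm (xref s) i) (hmax' s hsIcc)) (abs_nonneg _)
        _ = (∑ i, |θ i|) * K := by rw [Finset.sum_mul]
        _ ≤ L * K := mul_le_mul_of_nonneg_right hθL hK0
    calc |θ ⬝ᵥ xref s + σ s| ≤ |θ ⬝ᵥ xref s| + |σ s| := abs_add_le _ _
      _ ≤ L * K + Mσ := add_le_add h1 (hMσ s hs.1.le)
  -- main estimate at the maximizer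
  have hKbound : K ≤ gG * (L * K + Mσ) + gW * Mr := by
    rw [hK]
    refine pi_norm_le_iff_of_nonneg (by positivity) |>.mpr ?_
    intro i
    rw [Real.norm_eq_abs, hx t' ht'.1 i]
    calc |(∫ s in (0:ℝ)..t', g (t' - s) i * (θ ⬝ᵥ xref s + σ s)) +
          ∫ s in (0:ℝ)..t', w (t' - s) i * r s|
        ≤ |∫ s in (0:ℝ)..t', g (t' - s) i * (θ ⬝ᵥ xref s + σ s)| +
          |∫ s in (0:ℝ)..t', w (t' - s) i * r s| := abs_add_le _ _
      _ ≤ gG * (L * K + Mσ) + gW * Mr := by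
          refine add_le_add ?_ ?_
          · exact conv_bound (fun u => g u i) _ t' gG (L * K + Mσ) ht'.1
              (by positivity) (hgint i) (hgG i) hforce
          · exact conv_bound (fun u => w u i) _ t' gW Mr ht'.1 hMr0
              (hwint i) (hgW i) (fun s hs => hMr s hs.1.le)
  have hKfinal : K ≤ (gG * Mσ + gW * Mr) / (1 - gG * L) := by
    rw [le_div_iff₀ hden]
    nlinarith
  calc |xref t i₀| ≤ ‖xref t‖ := norm_le_pi_norm (xref t) i₀
    _ ≤ K := hmax' t ⟨ht, le_rfl⟩
    _ ≤ (gG * Mσ + gW * Mr) / (1 - gG * L) := hKfinal
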